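/- For every natural number n, f(fib(n)) = fib(n+1) if n is odd, and f(fib(n)) = fib(n+1) − 1 if n is even. -/

import Mathlib

noncomputable def phi : ℝ := (1 + Real.sqrt 5) / 2

noncomputable def f (n : ℕ) : ℕ := ⌊phi * n⌋₊

lemma phi_eq : phi = Real.goldenRatio := rfl

lemma key (n : ℕ) : phi * Nat.fib n = Nat.fib (n + 1) - Real.goldenConj ^ n := by
  rw [phi_eq, Real.coe_fib_eq, Real.coe_fib_eq]
  have h5 : Real.sqrt 5 ≠ 0 := by positivity
  have hsub : Real.goldenRatio - Real.goldenConj = Real.sqrt 5 := Real.goldenRatio_sub_goldenConj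
  have hmul : Real.goldenRatio * Real.goldenConj = -1 := Real.goldenRatio_mul_goldenConj
  field_simp
  ring_nf

lemma conj_abs_lt (n : ℕ) (hn : 0 < n) : |Real.goldenConj ^ n| < 1 := by
  rw [abs_pow]
  exact pow_lt_one₀ (abs_nonneg _) (abs_lt.mpr ⟨Real.neg_one_lt_goldenConj, by linarith [Real.goldenConj_neg]⟩) hn.ne'

theorem f_fib (n : ℕ) :
    (Odd n → f (Nat.fib n) = Nat.fib (n + 1)) ∧
    (Even n → f (Nat.fib n) = Nat.fib (n + 1) - 1) := by
  constructor
  · intro hodd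
    have hn : 0 < n := hodd.pos
    have hneg : Real.goldenConj ^ n < 0 := Odd.pow_neg hodd Real.goldenConj_neg
    have habs := conj_abs_lt n hn
    rw [abs_lt] at habs
    unfold f
    rw [Nat.floor_eq_iff (mul_nonneg (by rw [phi_eq]; positivity) (Nat.cast_nonneg _))]
    rw [key]
    constructor
    · linarith
    · linarith
  · intro heven
    rcases Nat.eq_zero_or_pos n with h0 | hn
    · subst h0; simp [f]
    have hpos : 0 < Real.goldenConj ^ n := heven.pow_pos Real.goldenConj_ne_zero
    have habs := conj_abs_lt n hn
    rw [abs_lt] at habs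
    have hfib : 1 ≤ Nat.fib (n + 1) := Nat.fib_pos.mpr (Nat.succ_pos n)
    unfold f
    rw [Nat.floor_eq_iff (mul_nonneg (by rw [phi_eq]; positivity) (Nat.cast_nonneg _))]
    rw [key]
    constructor
    · push_cast [hfib]
      linarith
    · push_cast [hfib]
      linarith
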